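/- Let G be a group. For every g ∈ G, the map ρ_g : CO(G) → ℝ/ℤ defined by ρ_g(c) = rot_c(g) is continuous, where CO(G) carries the subspace topology from the product topology on {0,±1}^{G³} and ℝ/ℤ carries the quotient topology. -/

import Mathlib

namespace Paper

variable {G : Type*} [Group G]

/-- A left-invariant circular ordering of a group `G`, as a function `G³ → {0, ±1} ⊆ ℤ`. -/
def IsCircOrd (c : G → G → G → ℤ) : Prop :=
  (∀ g₁ g₂ g₃ : G, c g₁ g₂ g₃ = 0 ↔ (g₁ = g₂ ∨ g₁ = g₃ ∨ g₂ = g₃)) ∧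
  (∀ g₁ g₂ g₃ : G, c g₁ g₂ g₃ = 0 ∨ c g₁ g₂ g₃ = 1 ∨ c g₁ g₂ g₃ = -1) ∧
  (∀ g₁ g₂ g₃ g₄ : G, c g₂ g₃ g₄ - c g₁ g₃ g₄ + c g₁ g₂ g₄ - c g₁ g₂ g₃ = 0) ∧
  (∀ g g₁ g₂ g₃ : G, c (g*g₁) (g*g₂) (g*g₃) = c g₁ g₂ g₃)

/-- The space CO(G) of circular orderings, topologized as a subspace of `ℤ^{G³}`
(all relevant values lie in the discrete set `{0,±1}`, and `ℤ` carries the discrete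
topology, so this is the subspace topology from the product topology on `{0,±1}^{G³}`). -/
abbrev CircOrd (G : Type*) [Group G] := {c : G → G → G → ℤ // IsCircOrd c}

open Classical in
/-- The cocycle `f_c`: `f_c(g,h) = 0` if `g = 1` or `h = 1` or `c(1,g,gh) = 1`,
and `f_c(g,h) = 1` otherwise (i.e. when `gh = 1 ≠ g`, or `c(1,gh,g) = 1`). -/
noncomputable def fc (c : G → G → G → ℤ) (g h : G) : ℤ :=
  if g = 1 ∨ h = 1 ∨ c 1 g (g*h) = 1 then 0 else 1

/-- Multiplication in the central extension `G̃_c = G × ℤ`: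
`(g,n)(h,m) = (gh, n+m+f_c(g,h))`. -/
noncomputable def liftMul (c : G → G → G → ℤ) (x y : G × ℤ) : G × ℤ :=
  (x.1 * y.1, x.2 + y.2 + fc c x.1 y.1)

/-- Powers (with natural number exponents) in `G̃_c`. -/
noncomputable def liftPow (c : G → G → G → ℤ) (x : G × ℤ) : ℕ → G × ℤ
  | 0 => (1, 0)
  | n+1 => liftMul c (liftPow c x n) x

/-- `[h]_c`: the unique integer `k` with `z_c^k ≤_c h <_c z_c^{k+1}`, where `<_c` is the
left-ordering of `G̃_c` with positive cone `{(g,n) : n ≥ 0} ∖ {(1,0)}` and `z_c = (1,1)`.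
Since `z_c^k = (1,k)` and `f_c(g,g⁻¹) = 1` for `g ≠ 1`, this is exactly the second
coordinate of `h`. -/
def liftFloor (h : G × ℤ) : ℤ := h.2

/-- The translation number `r̃ot_c(h)` of `h ∈ G̃_c`: the limit of `[hⁿ]_c / n`
(`limUnder` picks out the limit when it exists). -/
noncomputable def rotTilde (c : G → G → G → ℤ) (h : G × ℤ) : ℝ :=
  Filter.limUnder Filter.atTop (fun n : ℕ => (liftFloor (liftPow c h n) : ℝ) / (n : ℝ))

/-- The rotation number `rot_c(g) ∈ ℝ/ℤ`, computed using the lift `(g,0) ∈ G̃_c`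
(it is independent of the choice of lift). -/
noncomputable def rotc (c : G → G → G → ℤ) (g : G) : AddCircle (1:ℝ) :=
  ((rotTilde c (g, 0) : ℝ) : AddCircle (1:ℝ))

/-- `τ_c(g,h) = r̃ot_c(g̃h̃) − r̃ot_c(g̃) − r̃ot_c(h̃)`, computed using the lifts `(g,0)`
and `(h,0)` (it is independent of the choice of lifts). -/
noncomputable def tauc (c : G → G → G → ℤ) (g h : G) : ℝ :=
  rotTilde c (liftMul c (g,0) (h,0)) - rotTilde c (g,0) - rotTilde c (h,0)

/-- A positive cone of a group `G`: `P · P ⊆ P` and `P ∪ P⁻¹ = G ∖ {1}`.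
It determines a left-ordering by `g < h` iff `g⁻¹h ∈ P`. -/
def IsPositiveCone (P : Set G) : Prop :=
  (∀ a ∈ P, ∀ b ∈ P, a * b ∈ P) ∧ (P ∪ P⁻¹ = {g : G | g ≠ 1})

/-- The left-ordering determined by a positive cone. -/
def coneLt (P : Set G) (a b : G) : Prop := a⁻¹ * b ∈ P

open Classical in
/-- The secret left-ordering `c_<` determined by a positive cone `P`:
`c_<(a,b,c) = sign σ` where `σ` is the permutation sorting `(a,b,c)` into increasing
order, i.e. `c_< = 1` on positively cyclically ordered triples, `-1` on negatively
cyclically ordered triples, and `0` when the entries are not all distinct. -/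
noncomputable def circOfCone (P : Set G) : G → G → G → ℤ := fun a b c =>
  if (coneLt P a b ∧ coneLt P b c) ∨ (coneLt P b c ∧ coneLt P c a) ∨
      (coneLt P c a ∧ coneLt P a b) then 1
  else if (coneLt P c b ∧ coneLt P b a) ∨ (coneLt P b a ∧ coneLt P a c) ∨
      (coneLt P a c ∧ coneLt P c b) then -1
  else 0

/-- A circular ordering is a *secret left-ordering* if it is `c_<` for some
left-ordering `<` of `G`. -/
def IsSecret (c : G → G → G → ℤ) : Prop := ∃ P : Set G, IsPositiveCone P ∧ c = circOfCone P

section Aux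

open Filter

lemma fc_one_left (c : G → G → G → ℤ) (h : G) : fc c 1 h = 0 := by simp [fc]

lemma fc_one_right (c : G → G → G → ℤ) (g : G) : fc c g 1 = 0 := by simp [fc]

lemma fc_nonneg (c : G → G → G → ℤ) (g h : G) : 0 ≤ fc c g h := by
  unfold fc; split <;> omega

lemma fc_le_one (c : G → G → G → ℤ) (g h : G) : fc c g h ≤ 1 := by
  unfold fc; split <;> omega

/-- The key cocycle identity for `fc`. -/
lemma fc_cocycle {c : G → G → G → ℤ} (hc : IsCircOrd c) (g h k : G) :
    fc c g h + fc c (g*h) k = fc c h k + fc c g (h*k) := by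
  obtain ⟨h0, h1, h2, h3⟩ := hc
  by_cases hg : g = 1
  · subst hg; rw [one_mul, fc_one_left, fc_one_left, zero_add, add_zero]
  by_cases hh : h = 1
  · subst hh; rw [mul_one, one_mul, fc_one_right, fc_one_left]
  by_cases hk : k = 1
  · subst hk; rw [mul_one, fc_one_right, fc_one_right]; ring
  have hinv : c g (g*h) (g*(h*k)) = c 1 h (h*k) := by
    have := h3 g 1 h (h*k); simpa using this
  have star : c 1 h (h*k) - c 1 (g*h) (g*(h*k)) + c 1 g (g*(h*k)) - c 1 g (g*h) = 0 := by
    have h4 := h2 1 g (g*h) (g*(h*k)); rw [hinv] at h4; exact h4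
  have eA : fc c g h = if c 1 g (g*h) = 1 then 0 else 1 := by simp [fc, hg, hh]
  have eC : fc c h k = if c 1 h (h*k) = 1 then 0 else 1 := by simp [fc, hh, hk]
  by_cases hgh : g*h = 1
  · have hA : c 1 g (g*h) = 0 := by rw [hgh, h0]; tauto
    have eB : fc c (g*h) k = 0 := by simp [fc, hgh]
    by_cases hhk : h*k = 1
    · have hC : c 1 h (h*k) = 0 := by rw [hhk, h0]; tauto
      have eD : fc c g (h*k) = 0 := by simp [fc, hhk]
      rw [eA, eB, eC, eD]
      split_ifs <;> omega
    · have hB : c 1 (g*h) (g*(h*k)) = 0 := by rw [hgh, h0]; tauto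
      have eD : fc c g (h*k) = if c 1 g (g*(h*k)) = 1 then 0 else 1 := by
        simp [fc, hg, hhk]
      have hD0 : c 1 g (g*(h*k)) ≠ 0 := by
        intro e
        rcases (h0 1 g (g*(h*k))).1 e with e | e | e
        · exact hg e.symm
        · rw [← mul_assoc, hgh, one_mul] at e; exact hk e.symm
        · exact hhk (left_eq_mul.1 e)
      have hDval := h1 1 g (g*(h*k))
      rw [eA, eB, eC, eD]
      split_ifs <;> omega
  · have eB : fc c (g*h) k = if c 1 (g*h) (g*(h*k)) = 1 then 0 else 1 := by
      simp [fc, hgh, hk, mul_assoc]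
    have hA0 : c 1 g (g*h) ≠ 0 := by
      intro e
      rcases (h0 1 g (g*h)).1 e with e | e | e
      · exact hg e.symm
      · exact hgh e.symm
      · exact hh (left_eq_mul.1 e)
    have hAval := h1 1 g (g*h)
    by_cases hhk : h*k = 1
    · have hC : c 1 h (h*k) = 0 := by rw [hhk, h0]; tauto
      have hD : c 1 g (g*(h*k)) = 0 := by
        rw [hhk, mul_one, h0]; tauto
      have eD : fc c g (h*k) = 0 := by simp [fc, hhk]
      have hB0 : c 1 (g*h) (g*(h*k)) ≠ 0 := by
        intro e
        rcases (h0 1 (g*h) (g*(h*k))).1 e with e | e | e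
        · exact hgh e.symm
        · rw [hhk, mul_one] at e; exact hg e.symm
        · rw [hhk, mul_one] at e
          exact hh (mul_eq_left.1 e)
      have hBval := h1 1 (g*h) (g*(h*k))
      rw [eA, eB, eC, eD]
      split_ifs <;> omega
    · have hC0 : c 1 h (h*k) ≠ 0 := by
        intro e
        rcases (h0 1 h (h*k)).1 e with e | e | e
        · exact hh e.symm
        · exact hhk e.symm
        · exact hk (left_eq_mul.1 e)
      have hCval := h1 1 h (h*k)
      have eD : fc c g (h*k) = if c 1 g (g*(h*k)) = 1 then 0 else 1 := by
        simp [fc, hg, hhk]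
      by_cases hghk : g*(h*k) = 1
      · have hB : c 1 (g*h) (g*(h*k)) = 0 := by rw [hghk, h0]; tauto
        have hD : c 1 g (g*(h*k)) = 0 := by rw [hghk, h0]; tauto
        rw [eA, eB, eC, eD]
        split_ifs <;> omega
      · have hB0 : c 1 (g*h) (g*(h*k)) ≠ 0 := by
          intro e
          rcases (h0 1 (g*h) (g*(h*k))).1 e with e | e | e
          · exact hgh e.symm
          · exact hghk e.symm
          · rw [← mul_assoc] at e
            exact hk (left_eq_mul.1 e)
        have hD0 : c 1 g (g*(h*k)) ≠ 0 := by
          intro e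
          rcases (h0 1 g (g*(h*k))).1 e with e | e | e
          · exact hg e.symm
          · exact hghk e.symm
          · exact hhk (left_eq_mul.1 e)
        have hBval := h1 1 (g*h) (g*(h*k))
        have hDval := h1 1 g (g*(h*k))
        rw [eA, eB, eC, eD]
        split_ifs <;> omega

/-- The second coordinate of the `n`-th lift-power of `(g,0)`. -/
noncomputable def Sfun (c : G → G → G → ℤ) (g : G) (n : ℕ) : ℤ :=
  (liftPow c (g, 0) n).2

lemma liftPow_fst (c : G → G → G → ℤ) (g : G) (n : ℕ) :
    (liftPow c (g, 0) n).1 = g ^ n := by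
  induction n with
  | zero => simp [liftPow]
  | succ n ih => simp [liftPow, liftMul, ih, pow_succ]

lemma Sfun_zero (c : G → G → G → ℤ) (g : G) : Sfun c g 0 = 0 := rfl

lemma Sfun_succ (c : G → G → G → ℤ) (g : G) (n : ℕ) :
    Sfun c g (n+1) = Sfun c g n + fc c (g ^ n) g := by
  show (liftMul c (liftPow c (g,0) n) (g,0)).2 = _
  simp [liftMul, Sfun, liftPow_fst]

lemma Sfun_add {c : G → G → G → ℤ} (hc : IsCircOrd c) (g : G) (n m : ℕ) :
    Sfun c g (n+m) = Sfun c g n + Sfun c g m + fc c (g ^ n) (g ^ m) := by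
  induction m with
  | zero => simp [Sfun_zero, fc_one_right]
  | succ m ih =>
    have hco := fc_cocycle hc (g ^ n) (g ^ m) g
    rw [show n + (m+1) = (n+m) + 1 from rfl, Sfun_succ, ih, Sfun_succ]
    rw [pow_add, pow_succ] at *
    omega

lemma Sfun_mul {c : G → G → G → ℤ} (hc : IsCircOrd c) (g : G) (k n : ℕ) :
    (k : ℤ) * Sfun c g n ≤ Sfun c g (k*n) ∧
      Sfun c g (k*n) ≤ (k : ℤ) * Sfun c g n + (k : ℤ) := by
  induction k with
  | zero => simp [Sfun_zero]
  | succ k ih =>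
    have hadd := Sfun_add hc g (k*n) n
    have hnn := fc_nonneg c (g ^ (k*n)) (g ^ n)
    have hle := fc_le_one c (g ^ (k*n)) (g ^ n)
    rw [show (k+1)*n = k*n + n from by ring, hadd]
    push_cast
    constructor <;> nlinarith [ih.1, ih.2]

lemma Sfun_key {c : G → G → G → ℤ} (hc : IsCircOrd c) (g : G) (n m : ℕ) :
    ((m:ℤ)+1) * Sfun c g (n+1) ≤ ((n:ℤ)+1) * Sfun c g (m+1) + ((n:ℤ)+1) := by
  have h1 := (Sfun_mul hc g (m+1) (n+1)).1
  have h2 := (Sfun_mul hc g (n+1) (m+1)).2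
  rw [show (m+1)*(n+1) = (n+1)*(m+1) from by ring] at h1
  push_cast at h1 h2 ⊢
  linarith

lemma Sfun_key_real {c : G → G → G → ℤ} (hc : IsCircOrd c) (g : G) (n m : ℕ) :
    (Sfun c g (n+1) : ℝ) / ((n:ℝ)+1) ≤ ((Sfun c g (m+1) : ℝ) + 1) / ((m:ℝ)+1) := by
  rw [div_le_div_iff₀ (by positivity) (by positivity)]
  have := Sfun_key hc g n m
  have h : ((m:ℝ)+1) * (Sfun c g (n+1) : ℝ) ≤ ((n:ℝ)+1) * (Sfun c g (m+1) : ℝ) + ((n:ℝ)+1) := by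
    exact_mod_cast this
  linarith

lemma fc_continuous (a b : G) : Continuous (fun c : CircOrd G => fc c.1 a b) := by
  classical
  have heq : (fun c : CircOrd G => fc c.1 a b)
      = (fun z : ℤ => if a = 1 ∨ b = 1 ∨ z = 1 then (0:ℤ) else 1) ∘
        (fun c : CircOrd G => c.1 1 a (a*b)) := by
    funext c
    exact if_congr Iff.rfl rfl rfl
  rw [heq]
  exact continuous_of_discreteTopology.comp
    ((continuous_apply _).comp ((continuous_apply _).comp
      ((continuous_apply _).comp continuous_subtype_val)))

lemma Sfun_continuous (g : G) (n : ℕ) :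
    Continuous (fun c : CircOrd G => Sfun c.1 g n) := by
  induction n with
  | zero => simpa [Sfun_zero] using continuous_const
  | succ n ih =>
    simp only [Sfun_succ]
    exact ih.add (fc_continuous _ _)

end Aux

section Aux2

open Filter

/-- The approximating sequence `S_{n+1}/(n+1)` as a function of the circular order. -/
noncomputable def Ffun (g : G) (n : ℕ) (c : CircOrd G) : ℝ :=
  (Sfun c.1 g (n+1) : ℝ) / ((n:ℝ)+1)

/-- The limit of the approximating sequence. -/
noncomputable def Lfun (g : G) (c : CircOrd G) : ℝ :=
  sSup (Set.range fun n => Ffun g n c)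

lemma Ffun_bddAbove (g : G) (c : CircOrd G) :
    BddAbove (Set.range fun n => Ffun g n c) := by
  refine ⟨((Sfun c.1 g 1 : ℝ) + 1) / ((0:ℝ)+1), ?_⟩
  rintro x ⟨n, rfl⟩
  simpa [Ffun] using Sfun_key_real c.2 g n 0

lemma Ffun_le_Lfun (g : G) (c : CircOrd G) (n : ℕ) : Ffun g n c ≤ Lfun g c :=
  le_csSup (Ffun_bddAbove g c) ⟨n, rfl⟩

lemma Lfun_le (g : G) (c : CircOrd G) (n : ℕ) :
    Lfun g c ≤ Ffun g n c + 1/((n:ℝ)+1) := by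
  refine csSup_le ⟨Ffun g 0 c, ⟨0, rfl⟩⟩ ?_
  rintro x ⟨m, rfl⟩
  have h := Sfun_key_real c.2 g m n
  rw [add_div] at h
  exact h

lemma Ffun_tendsto (g : G) (c : CircOrd G) :
    Tendsto (fun n : ℕ => Ffun g n c) atTop (nhds (Lfun g c)) := by
  refine tendsto_of_tendsto_of_tendsto_of_le_of_le
    (g := fun n : ℕ => Lfun g c - 1/((n:ℝ)+1)) (h := fun _ => Lfun g c)
    ?_ tendsto_const_nhds ?_ ?_
  · have := tendsto_const_nhds (x := Lfun g c) (f := atTop (α := ℕ))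
      |>.sub tendsto_one_div_add_atTop_nhds_zero_nat
    simpa using this
  · intro n
    have := Lfun_le g c n
    simp only
    linarith
  · intro n
    exact Ffun_le_Lfun g c n

lemma rotTilde_eq_Lfun (g : G) (c : CircOrd G) :
    rotTilde c.1 (g, 0) = Lfun g c := by
  have htd : Tendsto (fun n : ℕ => (liftFloor (liftPow c.1 (g,0) n) : ℝ) / (n : ℝ))
      atTop (nhds (Lfun g c)) := by
    apply (Filter.tendsto_add_atTop_iff_nat
      (f := fun n : ℕ => (liftFloor (liftPow c.1 (g,0) n) : ℝ) / (n : ℝ)) 1).1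
    refine (Ffun_tendsto g c).congr fun n => ?_
    show Ffun g n c = (liftFloor (liftPow c.1 (g,0) (n+1)) : ℝ) / (((n+1 : ℕ)) : ℝ)
    have e : (((n+1 : ℕ)) : ℝ) = (n:ℝ)+1 := by push_cast; ring
    rw [e]; rfl
  exact htd.limUnder_eq

lemma Ffun_continuous (g : G) (n : ℕ) : Continuous (Ffun g n) := by
  apply Continuous.div_const
  exact continuous_of_discreteTopology.comp (Sfun_continuous g (n+1))

lemma Lfun_continuous (g : G) : Continuous (Lfun g) := by
  have hunif : TendstoUniformly (fun n c => Ffun g n c) (Lfun g) atTop := by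
    rw [Metric.tendstoUniformly_iff]
    intro ε hε
    obtain ⟨N, hN⟩ := exists_nat_one_div_lt hε
    rw [Filter.eventually_atTop]
    refine ⟨N, fun n hn c => ?_⟩
    rw [Real.dist_eq, abs_of_nonneg (by linarith [Ffun_le_Lfun g c n])]
    have h1 := Lfun_le g c n
    have h2 : 1/((n:ℝ)+1) ≤ 1/((N:ℝ)+1) := by
      apply one_div_le_one_div_of_le (by positivity)
      have : (N:ℝ) ≤ (n:ℝ) := by exact_mod_cast hn
      linarith
    linarith
  exact hunif.continuous (Filter.Frequently.of_forall (Ffun_continuous g))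

end Aux2

/-- Proposition 4.13: for each `g ∈ G`, the map `ρ_g : CO(G) → ℝ/ℤ`,
`ρ_g(c) = rot_c(g)`, is continuous. -/
theorem stmt6 (g : G) :
    Continuous (fun c : CircOrd G => rotc c.1 g) := by
  have hkey : (fun c : CircOrd G => rotc c.1 g)
      = fun c => ((Lfun g c : ℝ) : AddCircle (1:ℝ)) := by
    funext c
    show ((rotTilde c.1 (g, 0) : ℝ) : AddCircle (1:ℝ)) = _
    rw [rotTilde_eq_Lfun g c]
  rw [hkey]
  exact (AddCircle.continuous_mk' (1:ℝ)).comp (Lfun_continuous g)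

end Paper
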